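/- Intuitionistic disjunction is not uniformly definable in propositional dependence logic PD: there is no context φ[r₁,r₂] for PD such that for all PD-formulas θ₁, θ₂, φ[θ₁,θ₂] is semantically equivalent to θ₁ ∨ θ₂, where X ⊨ θ₁∨θ₂ iff X ⊨ θ₁ or X ⊨ θ₂. -/

import Mathlib

/-- Valuations: assignments of truth values to propositional variables. -/
abbrev Val := ℕ → Bool
/-- Teams: sets of valuations. -/
abbrev Team := Set Val

/-- Formulas of propositional downward closed team logic PT₀. -/
inductive PTForm : Type
  | pos : ℕ → PTForm
  | neg : ℕ → PTForm
  | bot : PTForm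
  | dep : List ℕ → ℕ → PTForm
  | conj : PTForm → PTForm → PTForm
  | tensor : PTForm → PTForm → PTForm
  | idis : PTForm → PTForm → PTForm
  | impl : PTForm → PTForm → PTForm

/-- Team semantics for PT₀. -/
def PTForm.sat : Team → PTForm → Prop
  | X, .pos p => ∀ v ∈ X, v p = true
  | X, .neg p => ∀ v ∈ X, v p = false
  | X, .bot => X = ∅
  | X, .dep ps q => ∀ v ∈ X, ∀ w ∈ X, (∀ p ∈ ps, v p = w p) → v q = w q
  | X, .conj φ ψ => PTForm.sat X φ ∧ PTForm.sat X ψ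
  | X, .tensor φ ψ => ∃ Y Z : Team, Y ⊆ X ∧ Z ⊆ X ∧ X = Y ∪ Z ∧ PTForm.sat Y φ ∧ PTForm.sat Z ψ
  | X, .idis φ ψ => PTForm.sat X φ ∨ PTForm.sat X ψ
  | X, .impl φ ψ => ∀ Y : Team, Y ⊆ X → PTForm.sat Y φ → PTForm.sat Y ψ

/-- A PT₀-formula is a PD-formula if it uses only ∧ and ⊗ as connectives. -/
def PTForm.isPD : PTForm → Prop
  | .pos _ => True
  | .neg _ => True
  | .bot => True
  | .dep _ _ => True
  | .conj φ ψ => φ.isPD ∧ ψ.isPD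
  | .tensor φ ψ => φ.isPD ∧ ψ.isPD
  | .idis _ _ => False
  | .impl _ _ => False

/-- Contexts for PD with m placeholder atoms r₁,…,rₘ: placeholders occur only
    as atoms, never negated and never inside dependence atoms. -/
inductive PDCtx (m : ℕ) : Type
  | ph : Fin m → PDCtx m
  | pos : ℕ → PDCtx m
  | neg : ℕ → PDCtx m
  | bot : PDCtx m
  | dep : List ℕ → ℕ → PDCtx m
  | conj : PDCtx m → PDCtx m → PDCtx m
  | tensor : PDCtx m → PDCtx m → PDCtx m

/-- Uniform substitution of formulas for the placeholders of a context. -/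
def PDCtx.subst {m : ℕ} : PDCtx m → (Fin m → PTForm) → PTForm
  | .ph i, θ => θ i
  | .pos p, _ => .pos p
  | .neg p, _ => .neg p
  | .bot, _ => .bot
  | .dep ps q, _ => .dep ps q
  | .conj φ ψ, θ => .conj (φ.subst θ) (ψ.subst θ)
  | .tensor φ ψ, θ => .tensor (φ.subst θ) (ψ.subst θ)

/-- The subformula occurrence of a context at a given position (path in the
    syntax tree; `false` = left child, `true` = right child).  Positions `x`
    with `subAt φ x = some ψ` are exactly the nodes of the syntax tree of `φ`,
    labeled by `ψ`; `[]` is the root. -/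
def PDCtx.subAt {m : ℕ} : PDCtx m → List Bool → Option (PDCtx m)
  | φ, [] => some φ
  | .conj φ _, false :: x => φ.subAt x
  | .conj _ ψ, true :: x => ψ.subAt x
  | .tensor φ _, false :: x => φ.subAt x
  | .tensor _ ψ, true :: x => ψ.subAt x
  | _, _ :: _ => none

/-- `x` is a (proper) ancestor of `y` in the syntax tree. -/
def PDCtx.Anc (x y : List Bool) : Prop := x <+: y ∧ x ≠ y

/-- A context whose top connective is not ∧ or ⊗, i.e. a leaf label. -/
def PDCtx.isAtomic {m : ℕ} : PDCtx m → Prop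
  | .conj _ _ => False
  | .tensor _ _ => False
  | _ => True

/-- A truth function for the substitution instance `φ[θ₁,…,θₘ]`: it assigns to
    each node of the syntax tree of `φ` a team satisfying the corresponding
    substituted subformula, teams being propagated unchanged through
    conjunction nodes and split as unions through tensor nodes. -/
def IsTruthFun {m : ℕ} (φ : PDCtx m) (θ : Fin m → PTForm) (τ : List Bool → Team) : Prop :=
  (∀ x ψ, φ.subAt x = some ψ → PTForm.sat (τ x) (ψ.subst θ)) ∧
  (∀ x ψ χ, φ.subAt x = some (.conj ψ χ) →
      τ (x ++ [false]) = τ x ∧ τ (x ++ [true]) = τ x) ∧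
  (∀ x ψ χ, φ.subAt x = some (.tensor ψ χ) →
      τ x = τ (x ++ [false]) ∪ τ (x ++ [true]))

/-- A context is inconsistent if every substitution instance (by PD-formulas)
    is satisfied only by the empty team. -/
def CtxInconsistent {m : ℕ} (ψ : PDCtx m) : Prop :=
  ∀ θ : Fin m → PTForm, (∀ i, (θ i).isPD) → ∀ X : Team, PTForm.sat X (ψ.subst θ) → X = ∅

/-! ### Auxiliary development -/

open Classical

noncomputable section UniformAux

/-- A PD tautology: `p₀ ⊗ ¬p₀`. -/
def TopF : PTForm := .tensor (.pos 0) (.neg 0)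

lemma isPD_TopF : TopF.isPD := ⟨trivial, trivial⟩

lemma sat_TopF (X : Team) : PTForm.sat X TopF := by
  refine ⟨{v ∈ X | v 0 = true}, {v ∈ X | v 0 = false}, ?_, ?_, ?_, ?_, ?_⟩
  · intro v hv; exact hv.1
  · intro v hv; exact hv.1
  · ext v; constructor
    · intro hv
      by_cases h : v 0 = true
      · exact Or.inl ⟨hv, h⟩
      · exact Or.inr ⟨hv, by simpa using h⟩
    · rintro (⟨h, _⟩ | ⟨h, _⟩) <;> exact h
  · intro v hv; exact hv.2
  · intro v hv; exact hv.2

/-- The empty team satisfies every PD formula. -/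
lemma sat_empty : ∀ {φ : PTForm}, φ.isPD → PTForm.sat ∅ φ := by
  intro φ
  induction φ with
  | pos p => intro _ v hv; exact absurd hv (Set.notMem_empty v)
  | neg p => intro _ v hv; exact absurd hv (Set.notMem_empty v)
  | bot => intro _; rfl
  | dep ps q => intro _ v hv; exact absurd hv (Set.notMem_empty v)
  | conj φ ψ ih1 ih2 => intro h; exact ⟨ih1 h.1, ih2 h.2⟩
  | tensor φ ψ ih1 ih2 =>
      intro h
      exact ⟨∅, ∅, subset_rfl, subset_rfl, by simp, ih1 h.1, ih2 h.2⟩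
  | idis φ ψ ih1 ih2 => intro h; exact h.elim
  | impl φ ψ ih1 ih2 => intro h; exact h.elim

/-- PD formulas are downward closed. -/
lemma sat_down : ∀ {φ : PTForm}, φ.isPD → ∀ {X Y : Team}, PTForm.sat X φ → Y ⊆ X →
    PTForm.sat Y φ := by
  intro φ
  induction φ with
  | pos p => intro _ X Y h hYX v hv; exact h v (hYX hv)
  | neg p => intro _ X Y h hYX v hv; exact h v (hYX hv)
  | bot => intro _ X Y h hYX; rw [h] at hYX; exact Set.subset_empty_iff.1 hYX
  | dep ps q => intro _ X Y h hYX v hv w hw hvw; exact h v (hYX hv) w (hYX hw) hvw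
  | conj φ ψ ih1 ih2 => intro hPD X Y h hYX; exact ⟨ih1 hPD.1 h.1 hYX, ih2 hPD.2 h.2 hYX⟩
  | tensor φ ψ ih1 ih2 =>
      intro hPD X Y h hYX
      obtain ⟨A, B, hAX, hBX, hX, hA, hB⟩ := h
      refine ⟨A ∩ Y, B ∩ Y, Set.inter_subset_right, Set.inter_subset_right, ?_, ?_, ?_⟩
      · ext v
        constructor
        · intro hv
          rcases (hX ▸ hYX hv) with h1 | h1
          · exact Or.inl ⟨h1, hv⟩
          · exact Or.inr ⟨h1, hv⟩
        · rintro (⟨_, hv⟩ | ⟨_, hv⟩) <;> exact hv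
      · exact ih1 hPD.1 hA Set.inter_subset_left
      · exact ih2 hPD.2 hB Set.inter_subset_left
  | idis φ ψ ih1 ih2 => intro h; exact h.elim
  | impl φ ψ ih1 ih2 => intro h; exact h.elim

/-- Variables of a formula. -/
def PTForm.vars : PTForm → Finset ℕ
  | .pos p => {p}
  | .neg p => {p}
  | .bot => ∅
  | .dep ps q => insert q ps.toFinset
  | .conj φ ψ => φ.vars ∪ ψ.vars
  | .tensor φ ψ => φ.vars ∪ ψ.vars
  | .idis φ ψ => φ.vars ∪ ψ.vars
  | .impl φ ψ => φ.vars ∪ ψ.vars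

/-- Restriction of a valuation to a finite set of variables. -/
def projV (V : Finset ℕ) (v : Val) : Val := fun q => if q ∈ V then v q else false

lemma projV_eq_of_agree {V : Finset ℕ} {v w : Val} (h : ∀ q ∈ V, v q = w q) :
    projV V v = projV V w := by
  funext q
  by_cases hq : q ∈ V
  · simp [projV, hq, h q hq]
  · simp [projV, hq]

lemma agree_of_projV_eq {V : Finset ℕ} {v w : Val} (h : projV V v = projV V w)
    {q : ℕ} (hq : q ∈ V) : v q = w q := by
  have := congrFun h q
  simpa [projV, hq] using this

/-- Locality: satisfaction of a PD formula only depends on the restriction of the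
team to the variables of the formula. -/
lemma sat_local : ∀ {φ : PTForm}, φ.isPD → ∀ {V : Finset ℕ}, φ.vars ⊆ V →
    ∀ {X Y : Team}, projV V '' X = projV V '' Y → PTForm.sat X φ → PTForm.sat Y φ := by
  intro φ
  induction φ with
  | pos p =>
      intro _ V hV X Y him h v hv
      have : projV V v ∈ projV V '' X := him ▸ ⟨v, hv, rfl⟩
      obtain ⟨x, hx, hxv⟩ := this
      have hp : p ∈ V := hV (by simp [PTForm.vars])
      rw [← agree_of_projV_eq hxv hp]; exact h x hx
  | neg p =>
      intro _ V hV X Y him h v hv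
      have : projV V v ∈ projV V '' X := him ▸ ⟨v, hv, rfl⟩
      obtain ⟨x, hx, hxv⟩ := this
      have hp : p ∈ V := hV (by simp [PTForm.vars])
      rw [← agree_of_projV_eq hxv hp]; exact h x hx
  | bot =>
      intro _ V hV X Y him h
      rw [h] at him
      show Y = ∅
      simpa using him.symm
  | dep ps q =>
      intro _ V hV X Y him h v hv w hw hvw
      have hq : q ∈ V := hV (by simp [PTForm.vars])
      have hps : ∀ p ∈ ps, p ∈ V := fun p hp => hV (by simp [PTForm.vars, hp])
      obtain ⟨x, hx, hxv⟩ : projV V v ∈ projV V '' X := him ▸ ⟨v, hv, rfl⟩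
      obtain ⟨y, hy, hyw⟩ : projV V w ∈ projV V '' X := him ▸ ⟨w, hw, rfl⟩
      have hxy : ∀ p ∈ ps, x p = y p := by
        intro p hp
        rw [agree_of_projV_eq hxv (hps p hp), agree_of_projV_eq hyw (hps p hp)]
        exact hvw p hp
      have := h x hx y hy hxy
      rw [agree_of_projV_eq hxv hq, agree_of_projV_eq hyw hq] at this
      exact this
  | conj φ ψ ih1 ih2 =>
      intro hPD V hV X Y him h
      exact ⟨ih1 hPD.1 (fun q hq => hV (Finset.mem_union_left _ hq)) him h.1,
             ih2 hPD.2 (fun q hq => hV (Finset.mem_union_right _ hq)) him h.2⟩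
  | tensor φ ψ ih1 ih2 =>
      intro hPD V hV X Y him h
      obtain ⟨A, B, hAX, hBX, hX, hA, hB⟩ := h
      refine ⟨{v ∈ Y | projV V v ∈ projV V '' A}, {v ∈ Y | projV V v ∈ projV V '' B},
        fun v hv => hv.1, fun v hv => hv.1, ?_, ?_, ?_⟩
      · ext v
        constructor
        · intro hv
          have : projV V v ∈ projV V '' X := him.symm ▸ ⟨v, hv, rfl⟩
          rw [hX, Set.image_union] at this
          rcases this with h1 | h1
          · exact Or.inl ⟨hv, h1⟩
          · exact Or.inr ⟨hv, h1⟩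
        · rintro (⟨hv, _⟩ | ⟨hv, _⟩) <;> exact hv
      · apply ih1 hPD.1 (fun q hq => hV (Finset.mem_union_left _ hq)) (X := A) ?_ hA
        apply Set.Subset.antisymm
        · rintro _ ⟨a, ha, rfl⟩
          have : projV V a ∈ projV V '' Y := him ▸ ⟨a, hX ▸ Or.inl ha, rfl⟩
          obtain ⟨y, hy, hya⟩ := this
          exact ⟨y, ⟨hy, hya ▸ ⟨a, ha, rfl⟩⟩, hya⟩
        · rintro _ ⟨y, ⟨_, hy2⟩, rfl⟩
          exact hy2
      · apply ih2 hPD.2 (fun q hq => hV (Finset.mem_union_right _ hq)) (X := B) ?_ hB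
        apply Set.Subset.antisymm
        · rintro _ ⟨a, ha, rfl⟩
          have : projV V a ∈ projV V '' Y := him ▸ ⟨a, hX ▸ Or.inr ha, rfl⟩
          obtain ⟨y, hy, hya⟩ := this
          exact ⟨y, ⟨hy, hya ▸ ⟨a, ha, rfl⟩⟩, hya⟩
        · rintro _ ⟨y, ⟨_, hy2⟩, rfl⟩
          exact hy2
  | idis φ ψ ih1 ih2 => intro h; exact h.elim
  | impl φ ψ ih1 ih2 => intro h; exact h.elim

end UniformAux
noncomputable section UniformAux2

/-- Conjunction of constancy atoms `=(q)` for all `q` in a list. -/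
def constList : List ℕ → PTForm
  | [] => TopF
  | q :: L => .conj (.dep [] q) (constList L)

lemma isPD_constList (L : List ℕ) : (constList L).isPD := by
  induction L with
  | nil => exact isPD_TopF
  | cons q L ih => exact ⟨trivial, ih⟩

lemma sat_constList_intro {L : List ℕ} {P : Team}
    (h : ∀ q ∈ L, ∀ v ∈ P, ∀ w ∈ P, v q = w q) : PTForm.sat P (constList L) := by
  induction L with
  | nil => exact sat_TopF P
  | cons q L ih =>
      refine ⟨?_, ih fun r hr => h r (List.mem_cons_of_mem _ hr)⟩
      intro v hv w hw _
      exact h q (List.mem_cons_self) v hv w hw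

lemma sat_constList_elim {L : List ℕ} {P : Team} (h : PTForm.sat P (constList L)) :
    ∀ q ∈ L, ∀ v ∈ P, ∀ w ∈ P, v q = w q := by
  induction L with
  | nil => intro q hq; exact absurd hq (List.not_mem_nil)
  | cons a L ih =>
      intro q hq v hv w hw
      rcases List.mem_cons.1 hq with rfl | hq
      · exact h.1 v hv w hw (by intro p hp; exact absurd hp (List.not_mem_nil))
      · exact ih h.2 q hq v hv w hw

/-- `n`-fold tensor power. -/
def powF : ℕ → PTForm → PTForm
  | 0, _ => .bot
  | n + 1, χ => .tensor χ (powF n χ)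

lemma isPD_powF (n : ℕ) {χ : PTForm} (h : χ.isPD) : (powF n χ).isPD := by
  induction n with
  | zero => trivial
  | succ n ih => exact ⟨h, ih⟩

/-- Union of a list of teams. -/
def unionList : List Team → Team
  | [] => ∅
  | T :: l => T ∪ unionList l

lemma mem_unionList {l : List Team} {v : Val} : v ∈ unionList l ↔ ∃ T ∈ l, v ∈ T := by
  induction l with
  | nil => simp [unionList]
  | cons T l ih =>
      simp only [unionList, Set.mem_union, ih, List.mem_cons]
      constructor
      · rintro (h | ⟨T', hT', hv⟩)
        · exact ⟨T, Or.inl rfl, h⟩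
        · exact ⟨T', Or.inr hT', hv⟩
      · rintro ⟨T', rfl | hT', hv⟩
        · exact Or.inl hv
        · exact Or.inr ⟨T', hT', hv⟩

lemma sat_powF_intro {χ : PTForm} : ∀ (l : List Team), (∀ T ∈ l, PTForm.sat T χ) →
    PTForm.sat (unionList l) (powF l.length χ) := by
  intro l
  induction l with
  | nil => intro _; rfl
  | cons T l ih =>
      intro h
      exact ⟨T, unionList l, Set.subset_union_left, Set.subset_union_right, rfl,
        h T (List.mem_cons_self), ih fun T' hT' => h T' (List.mem_cons_of_mem _ hT')⟩

lemma sat_powF_elim {χ : PTForm} : ∀ (n : ℕ) {X : Team}, PTForm.sat X (powF n χ) →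
    ∃ l : List Team, l.length = n ∧ (∀ T ∈ l, PTForm.sat T χ) ∧ X = unionList l := by
  intro n
  induction n with
  | zero =>
      intro X h
      exact ⟨[], rfl, by simp, h⟩
  | succ n ih =>
      intro X h
      obtain ⟨Y, Z, _, _, hX, hY, hZ⟩ := h
      obtain ⟨l, hlen, hl, hZl⟩ := ih hZ
      refine ⟨Y :: l, by simp [hlen], ?_, by rw [hX, hZl]; rfl⟩
      intro T hT
      rcases List.mem_cons.1 hT with rfl | hT
      · exact hY
      · exact hl T hT

/-- The PD formula `Θ_L`: satisfied by a team iff it misses some pattern on `L`. -/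
def ThetaL (L : List ℕ) : PTForm := powF (2 ^ L.length - 1) (constList L)

lemma isPD_ThetaL (L : List ℕ) : (ThetaL L).isPD := isPD_powF _ (isPD_constList L)

lemma sat_ThetaL_of_misses {L : List ℕ} {X : Team} (b : Fin L.length → Bool)
    (h : ∀ v ∈ X, (fun i => v (L.get i)) ≠ b) : PTForm.sat X (ThetaL L) := by
  classical
  set parts : List Team :=
    ((Finset.univ.erase b).toList).map
      (fun c : Fin L.length → Bool => {v ∈ X | (fun i => v (L.get i)) = c}) with hparts
  have hlen : parts.length = 2 ^ L.length - 1 := by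
    simp [hparts, Finset.length_toList, Finset.card_erase_of_mem (Finset.mem_univ b)]
  have hsat : ∀ T ∈ parts, PTForm.sat T (constList L) := by
    intro T hT
    obtain ⟨c, _, rfl⟩ := List.mem_map.1 hT
    apply sat_constList_intro
    intro q hq v hv w hw
    obtain ⟨i, hi⟩ := List.mem_iff_get.1 hq
    have h1 : v (L.get i) = c i := congrFun hv.2 i
    have h2 : w (L.get i) = c i := congrFun hw.2 i
    rw [← hi, h1, h2]
  have hXeq : X = unionList parts := by
    ext v
    constructor
    · intro hv
      rw [mem_unionList]
      refine ⟨{w ∈ X | (fun i => w (L.get i)) = fun i => v (L.get i)}, ?_, hv, rfl⟩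
      rw [hparts]
      apply List.mem_map.2
      refine ⟨fun i => v (L.get i), ?_, rfl⟩
      rw [Finset.mem_toList]
      exact Finset.mem_erase.2 ⟨h v hv, Finset.mem_univ _⟩
    · intro hv
      obtain ⟨T, hT, hvT⟩ := mem_unionList.1 hv
      rw [hparts] at hT
      obtain ⟨c, _, rfl⟩ := List.mem_map.1 hT
      exact hvT.1
  rw [ThetaL, ← hlen, hXeq]
  exact sat_powF_intro parts hsat

lemma sat_ThetaL_small {L : List ℕ} (hnd : L.Nodup) {X : Team}
    (h : PTForm.sat X (ThetaL L)) : ∃ c : Val, ∀ v ∈ X, ∃ q ∈ L, v q ≠ c q := by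
  classical
  by_contra hc
  push_neg at hc
  obtain ⟨l, hlen, hsatl, hXl⟩ := sat_powF_elim _ h
  -- from each pattern b, build a valuation and get a member of X realizing b on L
  have hvb : ∀ b : Fin L.length → Bool, ∃ v ∈ X, (fun i => v (L.get i)) = b := by
    intro b
    set cb : Val := fun q => if hq : q ∈ L then b ⟨L.idxOf q, List.idxOf_lt_length_iff.2 hq⟩
      else false with hcb
    obtain ⟨v, hvX, hvagree⟩ := hc cb
    refine ⟨v, hvX, ?_⟩
    funext i
    have hmem : L.get i ∈ L := L.get_mem _
    have := hvagree (L.get i) hmem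
    rw [this, hcb]
    simp only [dif_pos hmem]
    congr 1
    apply Fin.ext
    simp only
    have hgi : L.get ⟨L.idxOf (L.get i), List.idxOf_lt_length_iff.2 hmem⟩ = L.get i :=
      List.idxOf_get _
    exact Fin.val_eq_of_eq ((List.nodup_iff_injective_get.1 hnd) hgi)
  choose v hvX hvb using hvb
  have hin : ∀ b, ∃ i : Fin l.length, v b ∈ l.get i := by
    intro b
    have : v b ∈ unionList l := hXl ▸ hvX b
    obtain ⟨T, hT, hvT⟩ := mem_unionList.1 this
    obtain ⟨i, hi⟩ := List.mem_iff_get.1 hT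
    exact ⟨i, hi ▸ hvT⟩
  choose F hF using hin
  have hcard : Fintype.card (Fin l.length) < Fintype.card (Fin L.length → Bool) := by
    simp only [Fintype.card_fin, Fintype.card_fun, Fintype.card_bool]
    rw [hlen]
    exact Nat.sub_lt (Nat.pow_pos (by norm_num)) one_pos
  obtain ⟨b1, b2, hne, hFeq⟩ := Fintype.exists_ne_map_eq_of_card_lt F hcard
  apply hne
  have h1 : v b1 ∈ l.get (F b1) := hF b1
  have h2 : v b2 ∈ l.get (F b1) := hFeq ▸ hF b2
  have hsatT : PTForm.sat (l.get (F b1)) (constList L) := hsatl _ (l.get_mem _)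
  have : ∀ q ∈ L, v b1 q = v b2 q := fun q hq => sat_constList_elim hsatT q hq _ h1 _ h2
  rw [← hvb b1, ← hvb b2]
  funext i
  exact this (L.get i) (L.get_mem _)

end UniformAux2
noncomputable section UniformAux3

/-- `Θ` over a finite set of variables. -/
def ThetaF (S : Finset ℕ) : PTForm := ThetaL S.toList

lemma isPD_ThetaF (S : Finset ℕ) : (ThetaF S).isPD := isPD_ThetaL _

/-- A team is small if it misses some finite pattern. -/
def SmallT (X : Team) : Prop := ∃ (K : Finset ℕ) (c : Val), ∀ v ∈ X, ∃ q ∈ K, v q ≠ c q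

/-- A team is plump if it realizes every finite pattern. -/
def PlumpT (X : Team) : Prop := ∀ (K : Finset ℕ) (c : Val), ∃ v ∈ X, ∀ q ∈ K, v q = c q

lemma plump_of_not_small {X : Team} (h : ¬ SmallT X) : PlumpT X := by
  intro K c
  by_contra hc
  push_neg at hc
  exact h ⟨K, c, hc⟩

lemma smallT_empty : SmallT ∅ :=
  ⟨∅, fun _ => false, fun v hv => absurd hv (Set.notMem_empty v)⟩

lemma not_plump_empty : ¬ PlumpT (∅ : Team) := by
  intro h
  obtain ⟨v, hv, _⟩ := h ∅ (fun _ => false)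
  exact Set.notMem_empty v hv

lemma plump_univ : PlumpT (Set.univ : Team) := fun K c => ⟨c, Set.mem_univ c, fun _ _ => rfl⟩

lemma sat_ThetaF_of_misses {S K : Finset ℕ} {c : Val} (hK : K ⊆ S) {X : Team}
    (h : ∀ v ∈ X, ∃ q ∈ K, v q ≠ c q) : PTForm.sat X (ThetaF S) := by
  apply sat_ThetaL_of_misses (fun i => c (S.toList.get i))
  intro v hv heq
  obtain ⟨q, hqK, hne⟩ := h v hv
  have hqL : q ∈ S.toList := Finset.mem_toList.2 (hK hqK)
  obtain ⟨i, hi⟩ := List.mem_iff_get.1 hqL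
  have := congrFun heq i
  rw [hi] at this
  exact hne this

lemma small_of_sat_ThetaF {S : Finset ℕ} {X : Team} (h : PTForm.sat X (ThetaF S)) :
    ∃ c : Val, ∀ v ∈ X, ∃ q ∈ S, v q ≠ c q := by
  obtain ⟨c, hc⟩ := sat_ThetaL_small (Finset.nodup_toList S) h
  refine ⟨c, fun v hv => ?_⟩
  obtain ⟨q, hqL, hne⟩ := hc v hv
  exact ⟨q, Finset.mem_toList.1 hqL, hne⟩

lemma sat_ThetaF_mono {S S' : Finset ℕ} (hSS : S ⊆ S') {X : Team}
    (h : PTForm.sat X (ThetaF S)) : PTForm.sat X (ThetaF S') := by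
  obtain ⟨c, hc⟩ := small_of_sat_ThetaF h
  exact sat_ThetaF_of_misses hSS hc

lemma small_of_sat_ThetaF' {S : Finset ℕ} {X : Team} (h : PTForm.sat X (ThetaF S)) :
    SmallT X := by
  obtain ⟨c, hc⟩ := small_of_sat_ThetaF h
  exact ⟨S, c, hc⟩

lemma univ_not_sat_ThetaF {S : Finset ℕ} (h : PTForm.sat Set.univ (ThetaF S)) : False := by
  obtain ⟨c, hc⟩ := small_of_sat_ThetaF h
  obtain ⟨q, _, hne⟩ := hc c (Set.mem_univ c)
  exact hne rfl

/-- Monotone replacement: substitution instances of contexts are monotone in the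
substituted formulas, relative to subteams. -/
lemma subst_mono : ∀ (ψ : PDCtx 2) {θ θ' : Fin 2 → PTForm} {X : Team},
    (∀ i, ∀ Y : Team, Y ⊆ X → PTForm.sat Y (θ i) → PTForm.sat Y (θ' i)) →
    PTForm.sat X (ψ.subst θ) → PTForm.sat X (ψ.subst θ') := by
  intro ψ
  induction ψ with
  | ph i => intro θ θ' X h hs; exact h i X subset_rfl hs
  | pos p => intro _ _ _ _ hs; exact hs
  | neg p => intro _ _ _ _ hs; exact hs
  | bot => intro _ _ _ _ hs; exact hs
  | dep ps q => intro _ _ _ _ hs; exact hs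
  | conj ψ₁ ψ₂ ih1 ih2 =>
      intro θ θ' X h hs
      exact ⟨ih1 h hs.1, ih2 h hs.2⟩
  | tensor ψ₁ ψ₂ ih1 ih2 =>
      intro θ θ' X h hs
      obtain ⟨Y, Z, hYX, hZX, hX, hY, hZ⟩ := hs
      exact ⟨Y, Z, hYX, hZX, hX,
        ih1 (fun i W hW => h i W (hW.trans hYX)) hY,
        ih2 (fun i W hW => h i W (hW.trans hZX)) hZ⟩

lemma isPD_subst : ∀ (ψ : PDCtx 2) {θ : Fin 2 → PTForm}, (∀ i, (θ i).isPD) →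
    (ψ.subst θ).isPD := by
  intro ψ
  induction ψ with
  | ph i => intro θ h; exact h i
  | pos p => intro _ _; trivial
  | neg p => intro _ _; trivial
  | bot => intro _ _; trivial
  | dep ps q => intro _ _; trivial
  | conj ψ₁ ψ₂ ih1 ih2 => intro θ h; exact ⟨ih1 h, ih2 h⟩
  | tensor ψ₁ ψ₂ ih1 ih2 => intro θ h; exact ⟨ih1 h, ih2 h⟩

/-- Key upgrading lemma: a small team satisfying any substitution instance of a
context satisfies the `Θ` instance. -/
lemma small_to_theta {ψ : PDCtx 2} {θ : Fin 2 → PTForm} {X : Team} {K : Finset ℕ} {c : Val}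
    (hm : ∀ v ∈ X, ∃ q ∈ K, v q ≠ c q) (hs : PTForm.sat X (ψ.subst θ))
    {S : Finset ℕ} (hKS : K ⊆ S) :
    PTForm.sat X (ψ.subst ![ThetaF S, ThetaF S]) := by
  apply subst_mono ψ (θ := θ) ?_ hs
  intro i Y hYX _
  have : ∀ v ∈ Y, ∃ q ∈ K, v q ≠ c q := fun v hv => hm v (hYX hv)
  have hTheta : PTForm.sat Y (ThetaF S) := sat_ThetaF_of_misses hKS this
  fin_cases i
  · simpa using hTheta
  · simpa using hTheta

/-- Upgrade the `Θ` index in a substitution instance. -/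
lemma subst_theta_mono {ψ : PDCtx 2} {X : Team} {S S' : Finset ℕ} (hSS : S ⊆ S')
    (h : PTForm.sat X (ψ.subst ![ThetaF S, ThetaF S])) :
    PTForm.sat X (ψ.subst ![ThetaF S', ThetaF S']) := by
  apply subst_mono ψ (θ := ![ThetaF S, ThetaF S]) ?_ h
  intro i Y _ hY
  fin_cases i
  · simp only [Matrix.cons_val_zero] at hY ⊢
    exact sat_ThetaF_mono hSS hY
  · simp only [Matrix.cons_val_one, Matrix.head_cons] at hY ⊢
    exact sat_ThetaF_mono hSS hY

end UniformAux3
noncomputable section UniformAux4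

/-- Swap the two placeholders of a context. -/
def swapC : PDCtx 2 → PDCtx 2
  | .ph i => .ph (if i = 0 then 1 else 0)
  | .pos p => .pos p
  | .neg p => .neg p
  | .bot => .bot
  | .dep ps q => .dep ps q
  | .conj ψ₁ ψ₂ => .conj (swapC ψ₁) (swapC ψ₂)
  | .tensor ψ₁ ψ₂ => .tensor (swapC ψ₁) (swapC ψ₂)

lemma swapC_swapC : ∀ ψ : PDCtx 2, swapC (swapC ψ) = ψ := by
  intro ψ
  induction ψ with
  | ph i =>
      fin_cases i <;> simp [swapC]
  | pos p => rfl
  | neg p => rfl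
  | bot => rfl
  | dep ps q => rfl
  | conj ψ₁ ψ₂ ih1 ih2 => simp [swapC, ih1, ih2]
  | tensor ψ₁ ψ₂ ih1 ih2 => simp [swapC, ih1, ih2]

lemma subst_swapC : ∀ (ψ : PDCtx 2) (A B : PTForm),
    (swapC ψ).subst ![A, B] = ψ.subst ![B, A] := by
  intro ψ A B
  induction ψ with
  | ph i => fin_cases i <;> simp [swapC, PDCtx.subst]
  | pos p => rfl
  | neg p => rfl
  | bot => rfl
  | dep ps q => rfl
  | conj ψ₁ ψ₂ ih1 ih2 => simp [swapC, PDCtx.subst, ih1, ih2]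
  | tensor ψ₁ ψ₂ ih1 ih2 => simp [swapC, PDCtx.subst, ih1, ih2]

/-- `ψ[⊥, θ]` is only satisfied by the empty team (for all PD `θ`). -/
def B1 (ψ : PDCtx 2) : Prop :=
  ∀ θ : PTForm, θ.isPD → ∀ X : Team, PTForm.sat X (ψ.subst ![PTForm.bot, θ]) → X = ∅

/-- Whenever a team satisfies `ψ[⊤, ⊥]`, it satisfies `ψ[Θ_S, Θ_S]` for suitable `S`. -/
def R1 (ψ : PDCtx 2) : Prop :=
  ∀ (X : Team) (M : Finset ℕ), PTForm.sat X (ψ.subst ![TopF, PTForm.bot]) →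
    ∃ S : Finset ℕ, M ⊆ S ∧ PTForm.sat X (ψ.subst ![ThetaF S, ThetaF S])

def GStat (ψ : PDCtx 2) : Prop :=
  (R1 ψ ∧ R1 (swapC ψ)) ∨ B1 ψ ∨ B1 (swapC ψ)

lemma B1_conj_left {ψ₁ ψ₂ : PDCtx 2} (h : B1 ψ₁) : B1 (.conj ψ₁ ψ₂) := by
  intro θ hθ X hs
  exact h θ hθ X hs.1

lemma B1_conj_right {ψ₁ ψ₂ : PDCtx 2} (h : B1 ψ₂) : B1 (.conj ψ₁ ψ₂) := by
  intro θ hθ X hs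
  exact h θ hθ X hs.2

lemma B1_tensor {ψ₁ ψ₂ : PDCtx 2} (h1 : B1 ψ₁) (h2 : B1 ψ₂) : B1 (.tensor ψ₁ ψ₂) := by
  intro θ hθ X hs
  obtain ⟨Y, Z, _, _, hX, hY, hZ⟩ := hs
  rw [hX, h1 θ hθ Y hY, h2 θ hθ Z hZ, Set.union_empty]

lemma R1_conj {ψ₁ ψ₂ : PDCtx 2} (h1 : R1 ψ₁) (h2 : R1 ψ₂) : R1 (.conj ψ₁ ψ₂) := by
  intro X M hs
  obtain ⟨S₁, hMS₁, hs₁⟩ := h1 X M hs.1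
  obtain ⟨S₂, hS₁S₂, hs₂⟩ := h2 X S₁ hs.2
  exact ⟨S₂, hMS₁.trans hS₁S₂, subst_theta_mono hS₁S₂ hs₁, hs₂⟩

end UniformAux4
noncomputable section UniformAux5

lemma isPD_TB : ∀ i, (![TopF, PTForm.bot] i).isPD := by
  intro i; fin_cases i
  · exact isPD_TopF
  · trivial

lemma isPD_BT {θ : PTForm} (hθ : θ.isPD) : ∀ i, (![PTForm.bot, θ] i).isPD := by
  intro i; fin_cases i
  · trivial
  · exact hθ

lemma isPD_ThetaPair (S : Finset ℕ) : ∀ i, (![ThetaF S, ThetaF S] i).isPD := by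
  intro i; fin_cases i
  · exact isPD_ThetaF S
  · exact isPD_ThetaF S

/-- Transfer a satisfying team for a PD formula into a plump team, producing a
small team there whose complement is also controlled. -/
lemma plump_transfer {X : Team} (hXp : PlumpT X) {χ : PTForm} (hχ : χ.isPD)
    {W : Team} (hW : PTForm.sat W χ) (w₀ : Val) (hw₀ : w₀ ∈ W) :
    ∃ (Y : Team) (K₁ : Finset ℕ) (c₁ : Val) (K₂ : Finset ℕ) (c₂ : Val),
      Y ⊆ X ∧ PTForm.sat Y χ ∧
      (∀ v ∈ Y, ∃ q ∈ K₁, v q ≠ c₁ q) ∧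
      (∀ v ∈ X \ Y, ∃ q ∈ K₂, v q ≠ c₂ q) := by
  classical
  set V := χ.vars with hV
  set p := V.sup id + 1 with hpdef
  have hp : p ∉ V := by
    intro h
    have := Finset.le_sup (f := id) h
    simp only [id] at this
    omega
  set Y : Team := {v | v ∈ X ∧ v p = true ∧ projV V v ∈ projV V '' W} with hYdef
  have him : projV V '' Y = projV V '' W := by
    apply Set.Subset.antisymm
    · rintro _ ⟨v, hv, rfl⟩
      exact hv.2.2
    · rintro _ ⟨w, hw, rfl⟩
      obtain ⟨v, hvX, hag⟩ := hXp (insert p V) (fun q => if q = p then true else w q)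
      have hvp : v p = true := by simpa using hag p (Finset.mem_insert_self p V)
      have hagV : ∀ q ∈ V, v q = w q := by
        intro q hq
        have hqp : q ≠ p := fun h => hp (h ▸ hq)
        have := hag q (Finset.mem_insert_of_mem hq)
        rwa [if_neg hqp] at this
      have hproj : projV V v = projV V w := projV_eq_of_agree hagV
      exact ⟨v, ⟨hvX, hvp, hproj ▸ ⟨w, hw, rfl⟩⟩, hproj⟩
  refine ⟨Y, {p}, fun _ => false, insert p V, fun q => if q = p then true else w₀ q,
    fun v hv => hv.1, ?_, ?_, ?_⟩
  · exact sat_local hχ subset_rfl him.symm hW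
  · intro v hv
    exact ⟨p, Finset.mem_singleton_self p, by simp [hv.2.1]⟩
  · intro v hv
    by_contra hcon
    push_neg at hcon
    have hvp : v p = true := by simpa using hcon p (Finset.mem_insert_self p V)
    have hagV : ∀ q ∈ V, v q = w₀ q := by
      intro q hq
      have hqp : q ≠ p := fun h => hp (h ▸ hq)
      have := hcon q (Finset.mem_insert_of_mem hq)
      rwa [if_neg hqp] at this
    have : v ∈ Y := ⟨hv.1, hvp, projV_eq_of_agree hagV ▸ ⟨w₀, hw₀, rfl⟩⟩
    exact hv.2 this

/-- The main tensor case. -/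
lemma tensor_R1 (ψ₁ ψ₂ : PDCtx 2)
    (h₁ : R1 ψ₁ ∨ B1 ψ₁ ∨ B1 (swapC ψ₁))
    (h₂ : R1 ψ₂ ∨ B1 ψ₂ ∨ B1 (swapC ψ₂))
    (hex : ¬ (B1 ψ₁ ∧ B1 ψ₂)) : R1 (.tensor ψ₁ ψ₂) := by
  classical
  intro X M hs
  obtain ⟨Y₀, Z₀, hY₀X, hZ₀X, hXeq, hY₀, hZ₀⟩ := hs
  by_cases hXs : SmallT X
  · obtain ⟨K, c, hm⟩ := hXs
    refine ⟨M ∪ K, Finset.subset_union_left, ?_⟩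
    exact small_to_theta (ψ := .tensor ψ₁ ψ₂) hm
      ⟨Y₀, Z₀, hY₀X, hZ₀X, hXeq, hY₀, hZ₀⟩ Finset.subset_union_right
  · have hXp := plump_of_not_small hXs
    by_cases hZs : SmallT Z₀
    · by_cases hYs : SmallT Y₀
      · -- both parts small
        obtain ⟨K₁, c₁, hm₁⟩ := hYs
        obtain ⟨K₂, c₂, hm₂⟩ := hZs
        refine ⟨M ∪ K₁ ∪ K₂, by intro q hq; simp [Finset.mem_union]; tauto, ?_⟩
        refine ⟨Y₀, Z₀, hY₀X, hZ₀X, hXeq, ?_, ?_⟩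
        · exact small_to_theta hm₁ hY₀ (by intro q hq; simp [Finset.mem_union]; tauto)
        · exact small_to_theta hm₂ hZ₀ (by intro q hq; simp [Finset.mem_union]; tauto)
      · -- Y₀ is plump, hence X satisfies ψ₁[⊤,⊥]
        have hY₀p := plump_of_not_small hYs
        have him : projV (ψ₁.subst ![TopF, PTForm.bot]).vars '' Y₀ =
            projV (ψ₁.subst ![TopF, PTForm.bot]).vars '' X := by
          apply Set.Subset.antisymm (Set.image_mono hY₀X)
          rintro _ ⟨v, hv, rfl⟩
          obtain ⟨y, hyY, hag⟩ := hY₀p (ψ₁.subst ![TopF, PTForm.bot]).vars v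
          exact ⟨y, hyY, projV_eq_of_agree hag⟩
        have hX1 : PTForm.sat X (ψ₁.subst ![TopF, PTForm.bot]) :=
          sat_local (isPD_subst ψ₁ isPD_TB) subset_rfl him hY₀
        rcases h₁ with r | b | b2
        · obtain ⟨S, hMS, hSsat⟩ := r X M hX1
          exact ⟨S, hMS, X, ∅, subset_rfl, Set.empty_subset X, (Set.union_empty X).symm,
            hSsat, sat_empty (isPD_subst ψ₂ (isPD_ThetaPair S))⟩
        · -- B1 ψ₁, so ¬ B1 ψ₂: transfer a witness for ψ₂ into X
          have hnB2 : ¬ B1 ψ₂ := fun hb => hex ⟨b, hb⟩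
          rw [B1] at hnB2
          push_neg at hnB2
          obtain ⟨θs, hθsPD, W, hWsat, hWne⟩ := hnB2
          obtain ⟨w₀, hw₀⟩ := hWne
          obtain ⟨Z, K₁, c₁, K₂, c₂, hZX, hZsat, hmZ, hmYc⟩ :=
            plump_transfer hXp (isPD_subst ψ₂ (isPD_BT hθsPD)) hWsat w₀ hw₀
          refine ⟨M ∪ K₁ ∪ K₂, by intro q hq; simp [Finset.mem_union]; tauto, ?_⟩
          refine ⟨X \ Z, Z, Set.diff_subset, hZX, (Set.diff_union_of_subset hZX).symm, ?_, ?_⟩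
          · have hYsat : PTForm.sat (X \ Z) (ψ₁.subst ![TopF, PTForm.bot]) :=
              sat_down (isPD_subst ψ₁ isPD_TB) hX1 Set.diff_subset
            exact small_to_theta hmYc hYsat (by intro q hq; simp [Finset.mem_union]; tauto)
          · exact small_to_theta hmZ hZsat (by intro q hq; simp [Finset.mem_union]; tauto)
        · -- B2 ψ₁ : X = ∅, contradiction with plumpness
          have hXempty : X = ∅ := b2 TopF isPD_TopF X (by rw [subst_swapC]; exact hX1)
          exact absurd (hXempty ▸ smallT_empty) hXs
    · -- Z₀ is plump, hence X satisfies ψ₂[⊤,⊥]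
      have hZ₀p := plump_of_not_small hZs
      have him : projV (ψ₂.subst ![TopF, PTForm.bot]).vars '' Z₀ =
          projV (ψ₂.subst ![TopF, PTForm.bot]).vars '' X := by
        apply Set.Subset.antisymm (Set.image_mono hZ₀X)
        rintro _ ⟨v, hv, rfl⟩
        obtain ⟨y, hyY, hag⟩ := hZ₀p (ψ₂.subst ![TopF, PTForm.bot]).vars v
        exact ⟨y, hyY, projV_eq_of_agree hag⟩
      have hX2 : PTForm.sat X (ψ₂.subst ![TopF, PTForm.bot]) :=
        sat_local (isPD_subst ψ₂ isPD_TB) subset_rfl him hZ₀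
      rcases h₂ with r | b | b2
      · obtain ⟨S, hMS, hSsat⟩ := r X M hX2
        exact ⟨S, hMS, ∅, X, Set.empty_subset X, subset_rfl, (Set.empty_union X).symm,
          sat_empty (isPD_subst ψ₁ (isPD_ThetaPair S)), hSsat⟩
      · -- B1 ψ₂, so ¬ B1 ψ₁: transfer a witness for ψ₁ into X
        have hnB1 : ¬ B1 ψ₁ := fun hb => hex ⟨hb, b⟩
        rw [B1] at hnB1
        push_neg at hnB1
        obtain ⟨θs, hθsPD, W, hWsat, hWne⟩ := hnB1
        obtain ⟨w₀, hw₀⟩ := hWne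
        obtain ⟨Y, K₁, c₁, K₂, c₂, hYX, hYsat, hmY, hmZc⟩ :=
          plump_transfer hXp (isPD_subst ψ₁ (isPD_BT hθsPD)) hWsat w₀ hw₀
        refine ⟨M ∪ K₁ ∪ K₂, by intro q hq; simp [Finset.mem_union]; tauto, ?_⟩
        refine ⟨Y, X \ Y, hYX, Set.diff_subset, (Set.union_diff_cancel hYX).symm, ?_, ?_⟩
        · exact small_to_theta hmY hYsat (by intro q hq; simp [Finset.mem_union]; tauto)
        · have hZsat : PTForm.sat (X \ Y) (ψ₂.subst ![TopF, PTForm.bot]) :=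
            sat_down (isPD_subst ψ₂ isPD_TB) hX2 Set.diff_subset
          exact small_to_theta hmZc hZsat (by intro q hq; simp [Finset.mem_union]; tauto)
      · -- B2 ψ₂ : X = ∅, contradiction
        have hXempty : X = ∅ := b2 TopF isPD_TopF X (by rw [subst_swapC]; exact hX2)
        exact absurd (hXempty ▸ smallT_empty) hXs

end UniformAux5
noncomputable section UniformAux6

lemma G_all : ∀ ψ : PDCtx 2, GStat ψ := by
  intro ψ
  induction ψ with
  | ph i =>
      fin_cases i
      · right; left
        intro θ hθ X h
        exact h
      · right; right
        simp only [swapC]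
        intro θ hθ X h
        exact h
  | pos p =>
      left
      exact ⟨fun X M h => ⟨M, subset_rfl, h⟩, fun X M h => ⟨M, subset_rfl, h⟩⟩
  | neg p =>
      left
      exact ⟨fun X M h => ⟨M, subset_rfl, h⟩, fun X M h => ⟨M, subset_rfl, h⟩⟩
  | bot =>
      left
      exact ⟨fun X M h => ⟨M, subset_rfl, h⟩, fun X M h => ⟨M, subset_rfl, h⟩⟩
  | dep ps q =>
      left
      exact ⟨fun X M h => ⟨M, subset_rfl, h⟩, fun X M h => ⟨M, subset_rfl, h⟩⟩
  | conj ψ₁ ψ₂ ih1 ih2 =>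
      rcases ih1 with rr1 | b1 | b1s
      · rcases ih2 with rr2 | b2 | b2s
        · left
          exact ⟨R1_conj rr1.1 rr2.1, R1_conj rr1.2 rr2.2⟩
        · right; left; exact B1_conj_right b2
        · right; right; exact B1_conj_right b2s
      · right; left; exact B1_conj_left b1
      · right; right; exact B1_conj_left b1s
  | tensor ψ₁ ψ₂ ih1 ih2 =>
      by_cases hb1 : B1 ψ₁ ∧ B1 ψ₂
      · right; left; exact B1_tensor hb1.1 hb1.2
      · by_cases hb2 : B1 (swapC ψ₁) ∧ B1 (swapC ψ₂)
        · right; right; exact B1_tensor hb2.1 hb2.2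
        · left
          constructor
          · apply tensor_R1 ψ₁ ψ₂ ?_ ?_ hb1
            · rcases ih1 with rr | b | bs
              · exact Or.inl rr.1
              · exact Or.inr (Or.inl b)
              · exact Or.inr (Or.inr bs)
            · rcases ih2 with rr | b | bs
              · exact Or.inl rr.1
              · exact Or.inr (Or.inl b)
              · exact Or.inr (Or.inr bs)
          · apply tensor_R1 (swapC ψ₁) (swapC ψ₂) ?_ ?_ hb2
            · rcases ih1 with rr | b | bs
              · exact Or.inl rr.2
              · exact Or.inr (Or.inr ((swapC_swapC ψ₁).symm ▸ b))
              · exact Or.inr (Or.inl bs)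
            · rcases ih2 with rr | b | bs
              · exact Or.inl rr.2
              · exact Or.inr (Or.inr ((swapC_swapC ψ₂).symm ▸ b))
              · exact Or.inr (Or.inl bs)

end UniformAux6

theorem idis_not_uniformly_definable' :
    ¬ ∃ φ : PDCtx 2, ∀ θ₁ θ₂ : PTForm, θ₁.isPD → θ₂.isPD →
      ∀ X : Team, PTForm.sat X (φ.subst ![θ₁, θ₂]) ↔ PTForm.sat X (.idis θ₁ θ₂) := by
  rintro ⟨φ, h⟩
  have hne : (Set.univ : Team) ≠ ∅ := by
    intro he
    exact Set.notMem_empty (fun _ => false : Val) (he ▸ Set.mem_univ ((fun _ => false : Val)))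
  have hTB : PTForm.sat Set.univ (φ.subst ![TopF, PTForm.bot]) :=
    (h TopF PTForm.bot isPD_TopF trivial Set.univ).2 (Or.inl (sat_TopF _))
  rcases G_all φ with rr | b | bs
  · obtain ⟨S, _, hs⟩ := rr.1 Set.univ ∅ hTB
    have := (h (ThetaF S) (ThetaF S) (isPD_ThetaF S) (isPD_ThetaF S) Set.univ).1 hs
    rcases this with h' | h' <;> exact univ_not_sat_ThetaF h'
  · have hsat : PTForm.sat Set.univ (φ.subst ![PTForm.bot, TopF]) :=
      (h PTForm.bot TopF trivial isPD_TopF Set.univ).2 (Or.inr (sat_TopF _))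
    exact hne (b TopF isPD_TopF Set.univ hsat)
  · have hsat : PTForm.sat Set.univ ((swapC φ).subst ![PTForm.bot, TopF]) := by
      rw [subst_swapC]; exact hTB
    exact hne (bs TopF isPD_TopF Set.univ hsat)

/-- Intuitionistic disjunction is not uniformly definable in PD: no PD context
    φ[r₁,r₂] satisfies φ[θ₁,θ₂] ≡ θ₁ ∨ θ₂ for all PD-formulas θ₁, θ₂. -/
theorem idis_not_uniformly_definable :
    ¬ ∃ φ : PDCtx 2, ∀ θ₁ θ₂ : PTForm, θ₁.isPD → θ₂.isPD →
      ∀ X : Team, PTForm.sat X (φ.subst ![θ₁, θ₂]) ↔ PTForm.sat X (.idis θ₁ θ₂) := by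
  exact idis_not_uniformly_definable'
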